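/- Characterization of S_π (correctness of the membership subroutine in algorithm PSE-DD): assume the graph is acyclic and let S be a child of C. Then S ∈ S_π — i.e., the arc (C,S) occurs in some walk from C to E passing through R — if and only if there exists r ∈ R with Relation.ReflTransGen A S r and Relation.ReflTransGen A r E (that is, some walk from S to E passes through R, allowing S itself to lie in R). -/

import Mathlib

/-- `S ∈ S_π`: `S` is a child of `C` and the arc `(C,S)` occurs in some walk from
`C` to `E` passing through the set `R` of redlining attributes. A walk from `C` to
`E` is a list `l` with `List.Chain A C l` whose last vertex of `C :: l` is `E`;
its vertices are the entries of `C :: l`. -/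
def memSpi {V : Type*} (A : V → V → Prop) (C E : V) (R : Set V) (S : V) : Prop :=
  A C S ∧ ∃ l : List V, List.Chain A C l ∧
    (C :: l).getLast (List.cons_ne_nil C l) = E ∧
    [C, S] <:+: (C :: l) ∧ ∃ x ∈ C :: l, x ∈ R

private lemma aux_chain_append {V : Type*} {A : V → V → Prop} :
    ∀ (l1 : List V) (a b : V) (l2 : List V), List.Chain A a l1 →
      (a :: l1).getLast (List.cons_ne_nil a l1) = b → List.Chain A b l2 →
      List.Chain A a (l1 ++ l2)
  | [], a, b, l2, _, hlast, h2 => by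
      simp only [List.getLast_singleton] at hlast; subst hlast; simpa using h2
  | c :: l1', a, b, l2, h1, hlast, h2 => by
      rw [List.Chain, List.chain_cons] at h1
      exact List.chain_cons.2 ⟨h1.1,
        aux_chain_append l1' c b l2 h1.2 (by simpa using hlast) h2⟩

private lemma aux_getLast_append {V : Type*} (l1 : List V) (a b c : V) (l2 : List V)
    (h1 : (a :: l1).getLast (List.cons_ne_nil a l1) = b)
    (h2 : (b :: l2).getLast (List.cons_ne_nil b l2) = c) :
    (a :: (l1 ++ l2)).getLast (List.cons_ne_nil _ _) = c := by
  cases l2 with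
  | nil => simp only [List.getLast_singleton] at h2; subst h2; simpa using h1
  | cons d l2' =>
      rw [List.getLast_cons_cons] at h2
      have : (a :: (l1 ++ d :: l2')) = (a :: l1) ++ (d :: l2') := by simp
      rw [List.getLast_congr _ (by simp) this, List.getLast_append_of_ne_nil (by simp) (List.cons_ne_nil d l2')]
      exact h2

private lemma aux_transGen {V : Type*} {A : V → V → Prop} :
    ∀ (l : List V) (a x : V), List.Chain A a l → x ∈ l → Relation.TransGen A a x
  | [], _, _, _, hx => by simp at hx
  | c :: l', a, x, h, hx => by
      rw [List.Chain, List.chain_cons] at h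
      rcases List.mem_cons.1 hx with rfl | hx
      · exact Relation.TransGen.single h.1
      · exact (Relation.TransGen.single h.1).trans (aux_transGen l' c x h.2 hx)

private lemma aux_toLast {V : Type*} {A : V → V → Prop} :
    ∀ (l : List V) (a x : V), List.Chain A a l → x ∈ a :: l →
      Relation.ReflTransGen A x ((a :: l).getLast (List.cons_ne_nil a l))
  | [], a, x, _, hx => by
      simp only [List.mem_singleton] at hx
      subst hx; simp [Relation.ReflTransGen.refl]
  | c :: l', a, x, h, hx => by
      rw [List.Chain, List.chain_cons] at h
      rw [List.getLast_cons_cons]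
      rcases List.mem_cons.1 hx with rfl | hx
      · exact (Relation.ReflTransGen.single h.1).trans
          (aux_toLast l' c c h.2 (List.mem_cons_self (a := c) (l := l')))
      · exact aux_toLast l' c x h.2 hx

/-- Characterization of `S_π` (correctness of the membership subroutine of
algorithm PSE-DD): in an acyclic graph, a child `S` of `C` belongs to `S_π` iff
there exists `r ∈ R` with `S ⟶* r` and `r ⟶* E`. -/
theorem memSpi_iff {V : Type*} [Fintype V] (A : V → V → Prop) (C E : V) (R : Set V)
    (hacyc : ∀ v : V, ¬ Relation.TransGen A v v)
    (hCR : C ∉ R) (hER : E ∉ R)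
    (S : V) (hS : A C S) :
    memSpi A C E R S ↔
      ∃ r ∈ R, Relation.ReflTransGen A S r ∧ Relation.ReflTransGen A r E := by
  constructor
  · rintro ⟨-, l, hchain, hlast, hinfix, x, hxl, hxR⟩
    -- show the walk has the form C :: S :: t
    obtain ⟨s, t, hst⟩ := hinfix
    have hs : s = [] := by
      cases s with
      | nil => rfl
      | cons a s' =>
          exfalso
          simp only [List.cons_append] at hst
          have hl : s' ++ [C, S] ++ t = l := by injection hst
          have hCl : C ∈ l := by rw [← hl]; simp
          exact hacyc C (aux_transGen l C C hchain hCl)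
    subst hs
    simp only [List.nil_append, List.cons_append] at hst
    have hl : l = S :: t := by injection hst with h1 h2; exact h2.symm
    subst hl
    rw [List.Chain, List.chain_cons] at hchain
    have hxS : x ∈ S :: t := by
      rcases List.mem_cons.1 hxl with rfl | hx
      · exact absurd hxR hCR
      · exact hx
    refine ⟨x, hxR, ?_, ?_⟩
    · rcases List.mem_cons.1 hxS with rfl | hx
      · exact Relation.ReflTransGen.refl
      · exact (aux_transGen t S x hchain.2 hx).to_reflTransGen
    · have := aux_toLast t S x hchain.2 hxS
      rwa [show ((S :: t).getLast _) = E from by simpa using hlast] at this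
  · rintro ⟨r, hrR, hSr, hrE⟩
    obtain ⟨l1, h1, hl1⟩ := List.exists_isChain_cons_of_relationReflTransGen hSr
    obtain ⟨l2, h2, hl2⟩ := List.exists_isChain_cons_of_relationReflTransGen hrE
    refine ⟨hS, S :: (l1 ++ l2), List.chain_cons.2
      ⟨hS, aux_chain_append l1 S r l2 h1 hl1 h2⟩, ?_, ⟨[], l1 ++ l2, by simp⟩, r, ?_, hrR⟩
    · rw [List.getLast_cons_cons]
      exact aux_getLast_append l1 S r E l2 hl1 hl2
    · have : r ∈ S :: l1 := hl1 ▸ List.getLast_mem _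
      rcases List.mem_cons.1 this with rfl | h
      · simp
      · simp [h]
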